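/- Let f : X → X be a non-expansive bijection. Then f(a n) = a n and f(b n) = b n for every n ∈ ℕ. -/

import Mathlib

open Set

theorem stmt16
    (a b : ℕ → ℝ)
    (hlt : ∀ n, a n < b n)
    (haq : ∀ n, ∃ q : ℚ, (q : ℝ) = a n)
    (hbq : ∀ n, ∃ q : ℚ, (q : ℝ) = b n)
    (hdisj : ∀ i j, i ≠ j → Disjoint (Set.Icc (a i) (b i)) (Set.Icc (a j) (b j)))
    (hhalf : ∀ n, 2 * (b (n + 1) - a (n + 1)) < b n - a n)
    (hgap : ∀ i j, b i < a j → a j - b i > b 0 - a 0)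
    (h01 : a 0 < a 1)
    (hcof : ∀ x : ℝ, ∃ k l, b k < x ∧ x < a l)
    (m : ℕ → ℕ)
    (hm : ∀ n, b n < a (m n))
    (hmgap : ∀ n, Disjoint (Set.Ioo (b n) (a (m n))) (⋃ k, Set.Icc (a k) (b k)))
    (A : ℕ → Set ℝ)
    (hA : ∀ n, A n ⊆ Set.Ioo (b n) (a (m n)))
    (hAcard : ∀ n, ∀ U : Set ℝ, IsOpen U → U.Nonempty → U ⊆ Set.Ioo (b n) (a (m n)) →
      Cardinal.mk ↥(A n ∩ U) = Cardinal.aleph 1)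
    (X : Set ℝ)
    (hX : X = ⋃ n, (({x : ℝ | ∃ q : ℚ, (q : ℝ) = x} ∩ Set.Icc (a n) (b n)) ∪ A n))
    (f : ℝ → ℝ)
    (hbij : Set.BijOn f X X)
    (hne : ∀ x ∈ X, ∀ y ∈ X, |f x - f y| ≤ |x - y|) :
    ∀ n : ℕ, f (a n) = a n ∧ f (b n) = b n := by
  obtain ⟨hmaps, hinj, hsurj⟩ := hbij
  -- basic membership facts
  have haX : ∀ n, a n ∈ X := by
    intro n; rw [hX]
    exact mem_iUnion.2 ⟨n, Or.inl ⟨haq n, left_mem_Icc.2 (hlt n).le⟩⟩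
  have hbX : ∀ n, b n ∈ X := by
    intro n; rw [hX]
    exact mem_iUnion.2 ⟨n, Or.inl ⟨hbq n, right_mem_Icc.2 (hlt n).le⟩⟩
  have hAX : ∀ n, A n ⊆ X := by
    intro n y hy; rw [hX]; exact mem_iUnion.2 ⟨n, Or.inr hy⟩
  have hratX : ∀ (n : ℕ) (q : ℚ), (q : ℝ) ∈ Icc (a n) (b n) → (q : ℝ) ∈ X := by
    intro n q h; rw [hX]; exact mem_iUnion.2 ⟨n, Or.inl ⟨⟨q, rfl⟩, h⟩⟩
  have hlpos : ∀ n, 0 < b n - a n := fun n => sub_pos.2 (hlt n)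
  have hdecr : StrictAnti (fun n => b n - a n) := by
    apply strictAnti_nat_of_succ_lt
    intro n
    have h1 := hhalf n
    have h2 := hlpos (n + 1)
    show b (n + 1) - a (n + 1) < b n - a n
    linarith
  have hmono : ∀ {i j : ℕ}, i ≤ j → b j - a j ≤ b i - a i := fun h => hdecr.antitone h
  have hlen_le : ∀ i, b i - a i ≤ b 0 - a 0 := fun i => hmono (Nat.zero_le i)
  -- separation of distinct cells
  have horder : ∀ i j, i ≠ j → b i < a j ∨ b j < a i := by
    intro i j hij
    by_contra h
    push_neg at h
    obtain ⟨h1, h2⟩ := h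
    exact disjoint_left.1 (hdisj i j hij)
      ⟨le_max_left _ _, max_le (hlt i).le h1⟩
      ⟨le_max_right _ _, max_le h2 (hlt j).le⟩
  have hsep : ∀ i j, i ≠ j → ∀ x ∈ Icc (a i) (b i), ∀ y ∈ Icc (a j) (b j),
      b 0 - a 0 < |x - y| := by
    intro i j hij x hx y hy
    rcases horder i j hij with h | h
    · have hg := hgap i j h
      have h3 : y - x ≤ |x - y| := by rw [abs_sub_comm]; exact le_abs_self _
      have := hx.2; have := hy.1
      linarith
    · have hg := hgap j i h
      have h3 : x - y ≤ |x - y| := le_abs_self _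
      have := hy.2; have := hx.1
      linarith
  -- countability of X inside open cells
  have hcnt : ∀ k, (X ∩ Ioo (a k) (b k)).Countable := by
    intro k
    have hsub : X ∩ Ioo (a k) (b k) ⊆ Set.range (fun q : ℚ => (q : ℝ)) := by
      rintro x ⟨hx, hxo⟩
      rw [hX] at hx
      obtain ⟨n, hn⟩ := mem_iUnion.1 hx
      rcases hn with ⟨⟨q, hq⟩, -⟩ | hAn
      · exact ⟨q, hq⟩
      · exact absurd (mem_iUnion.2 ⟨k, Ioo_subset_Icc_self hxo⟩ :
            x ∈ ⋃ k, Icc (a k) (b k)) (disjoint_left.1 (hmgap n) (hA n hAn))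
    exact (Set.countable_range _).mono hsub
  -- Lipschitz extension of f
  have hlip : LipschitzOnWith 1 f X := by
    apply LipschitzOnWith.of_dist_le_mul
    intro x hx y hy
    rw [Real.dist_eq, Real.dist_eq, NNReal.coe_one, one_mul]
    exact hne x hx y hy
  obtain ⟨F, hF, hFX⟩ := hlip.extend_real
  have hFd : ∀ x y : ℝ, |F x - F y| ≤ |x - y| := by
    intro x y
    have := hF.dist_le_mul x y
    rwa [Real.dist_eq, Real.dist_eq, NNReal.coe_one, one_mul] at this
  -- interior gap points cannot map into open cells
  have hG : ∀ p, ∀ x ∈ Ioo (b p) (a (m p)), ∀ k, F x ∉ Ioo (a k) (b k) := by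
    intro p x hx k hFx
    set ε := min (min (F x - a k) (b k - F x)) (x - b p) with hε
    have hεpos : 0 < ε :=
      lt_min (lt_min (sub_pos.2 hFx.1) (sub_pos.2 hFx.2)) (sub_pos.2 hx.1)
    set U' := Ioo (x - ε) x with hU'
    have hU'sub : U' ⊆ Ioo (b p) (a (m p)) := by
      rintro y ⟨hy1, hy2⟩
      have h1 : ε ≤ x - b p := min_le_right _ _
      exact ⟨by linarith, lt_trans hy2 hx.2⟩
    have hU'ne : U'.Nonempty := ⟨x - ε / 2, by rw [hU']; simp only [mem_Ioo]; constructor <;> linarith⟩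
    have hmem : ∀ y, y ∈ A p ∩ U' → f y ∈ X ∩ Ioo (a k) (b k) := by
      rintro y ⟨hyA, hyU⟩
      have hyX := hAX p hyA
      have hfy : f y = F y := hFX hyX
      have hd : |F y - F x| ≤ |y - x| := hFd y x
      have h1 : |y - x| < ε := by
        rw [abs_of_neg (by linarith [hyU.2] : y - x < 0)]
        linarith [hyU.1]
      have h2 : |F y - F x| < ε := lt_of_le_of_lt hd h1
      have h3 := abs_lt.1 h2
      have h4 : ε ≤ F x - a k := le_trans (min_le_left _ _) (min_le_left _ _)
      have h5 : ε ≤ b k - F x := le_trans (min_le_left _ _) (min_le_right _ _)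
      exact ⟨hmaps hyX, by rw [hfy]; constructor <;> linarith [h3.1, h3.2]⟩
    have hcard := hAcard p U' isOpen_Ioo hU'ne hU'sub
    have hinj2 : Function.Injective
        (fun y : ↥(A p ∩ U') => (⟨f y.1, hmem y.1 y.2⟩ : ↥(X ∩ Ioo (a k) (b k)))) := by
      intro y z h
      have h' : f y.1 = f z.1 := congrArg Subtype.val h
      exact Subtype.ext (hinj (hAX p y.2.1) (hAX p z.2.1) h')
    have hle := Cardinal.mk_le_of_injective hinj2
    rw [hcard] at hle
    exact absurd (hle.trans ((hcnt k).le_aleph0)) (not_le.2 Cardinal.aleph0_lt_aleph_one)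
  -- b n cannot map into an open cell
  have hGb : ∀ n k, F (b n) ∉ Ioo (a k) (b k) := by
    intro n k hFb
    set ε := min (min (F (b n) - a k) (b k - F (b n))) (a (m n) - b n) with hε
    have hεpos : 0 < ε :=
      lt_min (lt_min (sub_pos.2 hFb.1) (sub_pos.2 hFb.2)) (sub_pos.2 (hm n))
    set U' := Ioo (b n) (b n + ε) with hU'
    have hU'sub : U' ⊆ Ioo (b n) (a (m n)) := by
      rintro y ⟨hy1, hy2⟩
      have h1 : ε ≤ a (m n) - b n := min_le_right _ _
      exact ⟨hy1, by linarith⟩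
    have hU'ne : U'.Nonempty := ⟨b n + ε / 2, by rw [hU']; simp only [mem_Ioo]; constructor <;> linarith⟩
    have hcard := hAcard n U' isOpen_Ioo hU'ne hU'sub
    have hne0 : Cardinal.mk ↥(A n ∩ U') ≠ 0 := by
      rw [hcard]
      exact ne_of_gt (lt_of_le_of_lt zero_le Cardinal.aleph0_lt_aleph_one)
    obtain ⟨⟨y, hyA, hyU⟩⟩ := Cardinal.mk_ne_zero_iff.1 hne0
    apply hG n y (hA n hyA) k
    have hd : |F y - F (b n)| ≤ |y - b n| := hFd y (b n)
    have h1 : |y - b n| < ε := by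
      rw [abs_of_pos (by linarith [hyU.1] : (0:ℝ) < y - b n)]
      linarith [hyU.2]
    have h2 := abs_lt.1 (lt_of_le_of_lt hd h1)
    have h4 : ε ≤ F (b n) - a k := le_trans (min_le_left _ _) (min_le_left _ _)
    have h5 : ε ≤ b k - F (b n) := le_trans (min_le_left _ _) (min_le_right _ _)
    constructor <;> linarith [h2.1, h2.2]
  -- every a n is the right endpoint of some gap
  have hLG : ∀ n, ∃ p, b p < a n ∧ a (m p) = a n := by
    intro n
    obtain ⟨k, l, hk, hl⟩ := hcof (a n)
    have hBne : (b '' {i : ℕ | b i < a n}).Nonempty := ⟨b k, ⟨k, hk, rfl⟩⟩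
    have hBdd : BddAbove (b '' {i : ℕ | b i < a n}) := by
      refine ⟨a n, ?_⟩
      rintro _ ⟨i, hi, rfl⟩
      exact le_of_lt hi
    have hlt0 := hlpos 0
    obtain ⟨y, hyB, hy⟩ := exists_lt_of_lt_csSup hBne
      (show sSup (b '' {i : ℕ | b i < a n}) - (b 0 - a 0)
          < sSup (b '' {i : ℕ | b i < a n}) by linarith)
    obtain ⟨p, hpS, rfl⟩ := hyB
    have hmax : ∀ i, b i < a n → b i ≤ b p := by
      intro i hi
      by_contra hlt'
      push_neg at hlt'
      have hip : i ≠ p := by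
        intro h; rw [h] at hlt'; exact lt_irrefl _ hlt'
      have h1 : b i ≤ sSup (b '' {i : ℕ | b i < a n}) := le_csSup hBdd ⟨i, hi, rfl⟩
      have h2 := hsep i p hip (b i) (right_mem_Icc.2 (hlt i).le) (b p) (right_mem_Icc.2 (hlt p).le)
      rw [abs_of_pos (sub_pos.2 hlt')] at h2
      linarith
    refine ⟨p, hpS, ?_⟩
    have h1 : ¬ a n < a (m p) := by
      intro hlt'
      exact disjoint_left.1 (hmgap p) ⟨hpS, hlt'⟩
        (mem_iUnion.2 ⟨n, left_mem_Icc.2 (hlt n).le⟩ : a n ∈ ⋃ k, Icc (a k) (b k))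
    have h2 : ¬ a (m p) < a n := by
      intro hlt'
      have hmn : m p ≠ n := by
        intro h; rw [h] at hlt'; exact lt_irrefl _ hlt'
      rcases le_or_gt (a n) (b (m p)) with hc | hc
      · exact disjoint_left.1 (hdisj (m p) n hmn) ⟨hlt'.le, hc⟩ (left_mem_Icc.2 (hlt n).le)
      · have h3 := hmax (m p) hc
        have h4 := hm p
        have h5 := hlt (m p)
        linarith
    linarith [not_lt.1 h1, not_lt.1 h2]
  -- a n cannot map into an open cell
  have hGa : ∀ n k, F (a n) ∉ Ioo (a k) (b k) := by
    intro n k hFa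
    obtain ⟨p, hbp, hmp⟩ := hLG n
    set ε := min (min (F (a n) - a k) (b k - F (a n))) (a n - b p) with hε
    have hεpos : 0 < ε :=
      lt_min (lt_min (sub_pos.2 hFa.1) (sub_pos.2 hFa.2)) (sub_pos.2 hbp)
    set U' := Ioo (a n - ε) (a n) with hU'
    have hU'sub : U' ⊆ Ioo (b p) (a (m p)) := by
      rw [hmp]
      rintro y ⟨hy1, hy2⟩
      have h1 : ε ≤ a n - b p := min_le_right _ _
      exact ⟨by linarith, hy2⟩
    have hU'ne : U'.Nonempty := ⟨a n - ε / 2, by rw [hU']; simp only [mem_Ioo]; constructor <;> linarith⟩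
    have hcard := hAcard p U' isOpen_Ioo hU'ne hU'sub
    have hne0 : Cardinal.mk ↥(A p ∩ U') ≠ 0 := by
      rw [hcard]
      exact ne_of_gt (lt_of_le_of_lt zero_le Cardinal.aleph0_lt_aleph_one)
    obtain ⟨⟨y, hyA, hyU⟩⟩ := Cardinal.mk_ne_zero_iff.1 hne0
    apply hG p y (hA p hyA) k
    have hd : |F y - F (a n)| ≤ |y - a n| := hFd y (a n)
    have h1 : |y - a n| < ε := by
      rw [abs_of_neg (by linarith [hyU.2] : y - a n < 0)]
      linarith [hyU.1]
    have h2 := abs_lt.1 (lt_of_le_of_lt hd h1)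
    have h4 : ε ≤ F (a n) - a k := le_trans (min_le_left _ _) (min_le_left _ _)
    have h5 : ε ≤ b k - F (a n) := le_trans (min_le_left _ _) (min_le_right _ _)
    constructor <;> linarith [h2.1, h2.2]
  -- every X-point in an open cell is an F-image of a closed cell point
  have hcov : ∀ w ∈ X, ∀ n : ℕ, w ∈ Ioo (a n) (b n) →
      ∃ j, ∃ x ∈ Icc (a j) (b j), F x = w := by
    intro w hw n hwn
    obtain ⟨x, hxX, hfx⟩ := hsurj hw
    have hfx' : F x = w := by rw [← hFX hxX]; exact hfx
    have hxX' := hxX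
    rw [hX] at hxX'
    obtain ⟨j, hj⟩ := mem_iUnion.1 hxX'
    rcases hj with ⟨-, hIcc⟩ | hAj
    · exact ⟨j, x, hIcc, hfx'⟩
    · exact absurd (hfx' ▸ hwn) (hG j x (hA j hAj) n)
  have hdiam : ∀ j (x y : ℝ), x ∈ Icc (a j) (b j) → y ∈ Icc (a j) (b j) →
      |F x - F y| ≤ b j - a j := by
    intro j x y hx hy
    refine (hFd x y).trans (abs_le.2 ⟨?_, ?_⟩) <;>
      [linarith [hx.1, hx.2, hy.1, hy.2]; linarith [hx.1, hx.2, hy.1, hy.2]]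
  have hexcl : ∀ j n k, n ≠ k →
      (∃ x ∈ Icc (a j) (b j), F x ∈ Ioo (a n) (b n)) →
      (∃ y ∈ Icc (a j) (b j), F y ∈ Ioo (a k) (b k)) → False := by
    rintro j n k hnk ⟨x, hx, hFx⟩ ⟨y, hy, hFy⟩
    have h1 := hdiam j x y hx hy
    have h2 := hsep n k hnk (F x) (Ioo_subset_Icc_self hFx) (F y) (Ioo_subset_Icc_self hFy)
    linarith [hlen_le j]
  -- the image of cell n meets open cell n
  have hM : ∀ n, ∃ x ∈ Icc (a n) (b n), F x ∈ Ioo (a n) (b n) := by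
    intro n
    induction n using Nat.strong_induction_on with
    | _ n IH =>
    have hl1 := hlpos (n + 1)
    have hmid : a n + (b (n + 1) - a (n + 1)) < b n - (b (n + 1) - a (n + 1)) := by
      have := hhalf n; linarith
    obtain ⟨q, hq1, hq2⟩ := exists_rat_btwn hmid
    have hqI : (q : ℝ) ∈ Ioo (a n) (b n) := ⟨by linarith, by linarith⟩
    obtain ⟨j, x, hxI, hFx⟩ := hcov (q : ℝ) (hratX n q (Ioo_subset_Icc_self hqI)) n hqI
    rcases lt_trichotomy j n with hj | hj | hj
    · exact absurd (hexcl j j n (Nat.ne_of_lt hj) (IH j hj)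
        ⟨x, hxI, by rw [hFx]; exact hqI⟩) not_false
    · exact ⟨x, hj ▸ hxI, by rw [hFx]; exact hqI⟩
    · exfalso
      have hbj : F (b j) ∉ Ioo (a n) (b n) := hGb j n
      have hsubI : uIcc x (b j) ⊆ Icc (a j) (b j) := by
        rw [uIcc_of_le hxI.2]
        exact Icc_subset_Icc hxI.1 le_rfl
      have hiv := intermediate_value_uIcc
        (hF.continuous.continuousOn : ContinuousOn F (uIcc x (b j)))
      have hlj : b j - a j ≤ b (n + 1) - a (n + 1) := hmono hj
      rcases le_or_gt (F (b j)) (a n) with hc | hc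
      · have hmem : a n ∈ uIcc (F x) (F (b j)) :=
          mem_uIcc.2 (Or.inr ⟨hc, by rw [hFx]; exact hqI.1.le⟩)
        obtain ⟨y, hy, hFy⟩ := hiv hmem
        have hd := hdiam j x y hxI (hsubI hy)
        rw [hFx, hFy] at hd
        rw [abs_of_pos (by linarith [hqI.1] : (0:ℝ) < (q:ℝ) - a n)] at hd
        linarith
      · have hc' : b n ≤ F (b j) := by
          by_contra hcc
          push_neg at hcc
          exact hbj ⟨hc, hcc⟩
        have hmem : b n ∈ uIcc (F x) (F (b j)) :=
          mem_uIcc.2 (Or.inl ⟨by rw [hFx]; exact hqI.2.le, hc'⟩)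
        obtain ⟨y, hy, hFy⟩ := hiv hmem
        have hd := hdiam j x y hxI (hsubI hy)
        rw [hFx, hFy] at hd
        rw [abs_of_neg (by linarith [hqI.2] : (q:ℝ) - b n < 0)] at hd
        linarith
  -- hence every X-point of open cell n is an image from closed cell n itself
  have hQn : ∀ (n : ℕ) (w : ℝ), w ∈ X → w ∈ Ioo (a n) (b n) →
      ∃ x ∈ Icc (a n) (b n), F x = w := by
    intro n w hwX hw
    obtain ⟨j, x, hxI, hFx⟩ := hcov w hwX n hw
    rcases eq_or_ne j n with rfl | hjn
    · exact ⟨x, hxI, hFx⟩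
    · exact absurd (hexcl j j n hjn (hM j) ⟨x, hxI, by rw [hFx]; exact hw⟩) not_false
  -- images of closed cell points stay in the closed cell
  have hRIcc : ∀ (n : ℕ) (z : ℝ), z ∈ Icc (a n) (b n) → F z ∈ Icc (a n) (b n) := by
    intro n z hz
    constructor
    · by_contra h
      push_neg at h
      set ε := a n - F z with hε
      have hεpos : 0 < ε := sub_pos.2 h
      obtain ⟨q, hq1, hq2⟩ := exists_rat_btwn
        (show max (a n) (b n - ε) < b n from max_lt (hlt n) (by linarith))
      have hqI : (q : ℝ) ∈ Ioo (a n) (b n) := ⟨lt_of_le_of_lt (le_max_left _ _) hq1, hq2⟩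
      obtain ⟨x, hxI, hFx⟩ := hQn n (q : ℝ) (hratX n q (Ioo_subset_Icc_self hqI)) hqI
      have hd := hdiam n z x hz hxI
      rw [hFx] at hd
      have h2 : b n - ε < (q : ℝ) := lt_of_le_of_lt (le_max_right _ _) hq1
      have h3 : (q : ℝ) - F z ≤ |F z - (q : ℝ)| := by
        rw [abs_sub_comm]; exact le_abs_self _
      linarith
    · by_contra h
      push_neg at h
      set ε := F z - b n with hε
      have hεpos : 0 < ε := sub_pos.2 h
      obtain ⟨q, hq1, hq2⟩ := exists_rat_btwn
        (show a n < min (a n + ε) (b n) from lt_min (by linarith) (hlt n))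
      have hqI : (q : ℝ) ∈ Ioo (a n) (b n) := ⟨hq1, lt_of_lt_of_le hq2 (min_le_right _ _)⟩
      obtain ⟨x, hxI, hFx⟩ := hQn n (q : ℝ) (hratX n q (Ioo_subset_Icc_self hqI)) hqI
      have hd := hdiam n z x hz hxI
      rw [hFx] at hd
      have h2 : (q : ℝ) < a n + ε := lt_of_lt_of_le hq2 (min_le_left _ _)
      have h3 : F z - (q : ℝ) ≤ |F z - (q : ℝ)| := le_abs_self _
      linarith
  have hR1a : ∀ n, F (a n) = a n ∨ F (a n) = b n := by
    intro n
    have h1 := hRIcc n (a n) (left_mem_Icc.2 (hlt n).le)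
    have h2 := hGa n n
    rcases eq_or_lt_of_le h1.1 with he | hlt'
    · exact Or.inl he.symm
    rcases eq_or_lt_of_le h1.2 with he | hlt''
    · exact Or.inr he
    · exact absurd ⟨hlt', hlt''⟩ h2
  have hR1b : ∀ n, F (b n) = a n ∨ F (b n) = b n := by
    intro n
    have h1 := hRIcc n (b n) (right_mem_Icc.2 (hlt n).le)
    have h2 := hGb n n
    rcases eq_or_lt_of_le h1.1 with he | hlt'
    · exact Or.inl he.symm
    rcases eq_or_lt_of_le h1.2 with he | hlt''
    · exact Or.inr he
    · exact absurd ⟨hlt', hlt''⟩ h2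
  have hinjab : ∀ n, F (a n) ≠ F (b n) := by
    intro n h
    have h2 : a n = b n := hinj (haX n) (hbX n) (by rw [hFX (haX n), hFX (hbX n), h])
    exact (hlt n).ne h2
  -- the reflection case is impossible
  have hfb : ∀ n, F (b n) = b n := by
    intro n
    rcases hR1b n with hfb' | hfb'
    · exfalso
      have huI : (a n + b n) / 2 ∈ Ioo (a n) (b n) := by
        constructor <;> [linarith [hlt n]; linarith [hlt n]]
      have hFa' : a (m n) ≤ F (a (m n)) := by
        rcases hR1a (m n) with h | h
        · exact h.ge
        · rw [h]; exact (hlt (m n)).le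
      have h1 : F (b n) < (a n + b n) / 2 := by rw [hfb']; exact huI.1
      have h2 : (a n + b n) / 2 < F (a (m n)) :=
        lt_of_lt_of_le (lt_trans huI.2 (hm n)) hFa'
      have hiv := intermediate_value_uIcc
        (hF.continuous.continuousOn : ContinuousOn F (uIcc (b n) (a (m n))))
      have hmem : (a n + b n) / 2 ∈ uIcc (F (b n)) (F (a (m n))) :=
        mem_uIcc.2 (Or.inl ⟨h1.le, h2.le⟩)
      obtain ⟨t, ht, hFt⟩ := hiv hmem
      rw [uIcc_of_le (hm n).le] at ht
      rcases eq_or_lt_of_le ht.1 with he | hlt1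
      · have h3 : F (b n) = (a n + b n) / 2 := he ▸ hFt
        linarith
      rcases eq_or_lt_of_le ht.2 with he | hlt2
      · have h3 : F (a (m n)) = (a n + b n) / 2 := by rw [← he]; exact hFt
        linarith
      · exact hG n t ⟨hlt1, hlt2⟩ n (by rw [hFt]; exact huI)
    · exact hfb'
  have hfa : ∀ n, F (a n) = a n := by
    intro n
    rcases hR1a n with h | h
    · exact h
    · exact absurd (h.trans (hfb n).symm) (hinjab n)
  intro n
  exact ⟨(hFX (haX n)).trans (hfa n), (hFX (hbX n)).trans (hfb n)⟩
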